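/- Quasi-monotonic functions have unique factorizations of the form d_α ∘ u_β: if α, α' are multi-indices of dimension ≤ m and β, β' are multi-indices of dimension ≤ n such that d_α ∘ u_β and d_{α'} ∘ u_{β'} are both defined as maps [n] → [m] and d_α ∘ u_β = d_{α'} ∘ u_{β'}, then α = α' and β = β'. -/

import Mathlib

/-- The elementary coface `d_i^{(n+1)} : [n] → [n+1]` (monotonic injection omitting `i`):
`k ↦ k` for `k < i` and `k ↦ k+1` for `k ≥ i`. -/
def dMap (n i : ℕ) : Fin (n + 1) → Fin (n + 2) :=
  fun k => if (k : ℕ) < i then ⟨k, by omega⟩ else ⟨(k : ℕ) + 1, by omega⟩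

/-- The elementary quasi-codegeneracy `u_i^{(n)} : [n+1] → [n]`:
`u_i 0 = u_i i = 0`, `u_i k = k` for `1 ≤ k ≤ i-1`, and `u_i k = k-1` for `k > i`. -/
def uMap (n i : ℕ) : Fin (n + 2) → Fin (n + 1) :=
  fun k => if (k : ℕ) = 0 ∨ (k : ℕ) = i then 0
    else if h : (k : ℕ) < i ∧ (k : ℕ) < n + 1 then ⟨k, h.2⟩
    else ⟨(k : ℕ) - 1, by omega⟩

/-- A function `f : [n] → [m]` is quasi-monotonic if `f 0 = 0` and `f` is strictly
monotonic outside the preimage of `0`. -/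
def QuasiMonotonic {n m : ℕ} (f : Fin (n + 1) → Fin (m + 1)) : Prop :=
  f 0 = 0 ∧ ∀ p q : Fin (n + 1), p < q → f p ≠ 0 → f q ≠ 0 → f p < f q

/-- A multi-index of dimension `≤ n`: a strictly increasing sequence of indices
`i_1 < … < i_k` with `1 ≤ i_p ≤ n` for all `p` (its length is `α.length`). -/
def IsMultiIndex (n : ℕ) (α : List ℕ) : Prop :=
  List.Chain' (· < ·) α ∧ ∀ i ∈ α, 1 ≤ i ∧ i ≤ n

/-- The quasi-codegeneracy `u_α = u_{i_1} ∘ u_{i_2} ∘ ⋯ ∘ u_{i_k} : [n] → [n-k]`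
associated to a multi-index `α = (i_1, …, i_k)`; each elementary factor is taken at the
appropriate dimension (`u_{i_k}` is applied first, at the highest dimension). -/
def uComp (n : ℕ) : (α : List ℕ) → α.length ≤ n → Fin (n + 1) → Fin (n - α.length + 1)
  | [], _ => fun k => k
  | i :: rest, h => fun k =>
      Fin.cast (by simp only [List.length_cons] at h ⊢; omega)
        (uMap (n - rest.length - 1) i
          (Fin.cast (by simp only [List.length_cons] at h; omega)
            (uComp n rest (by simp only [List.length_cons] at h; omega) k)))

/-- The coface `d_α = d_{i_k} ∘ d_{i_{k-1}} ∘ ⋯ ∘ d_{i_1} : [n-k] → [n]`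
associated to a multi-index `α = (i_1, …, i_k)`; each elementary factor is taken at the
appropriate dimension (`d_{i_1}` is applied first, at the lowest dimension). -/
def dComp (n : ℕ) : (α : List ℕ) → α.length ≤ n → Fin (n - α.length + 1) → Fin (n + 1)
  | [], _ => fun k => k
  | i :: rest, h => fun k =>
      dComp n rest (by simp only [List.length_cons] at h; omega)
        (Fin.cast (by simp only [List.length_cons] at h; omega)
          (dMap (n - rest.length - 1) i
            (Fin.cast (by simp only [List.length_cons] at h ⊢; omega) k)))

def uN (i k : ℕ) : ℕ := if k = 0 then 0 else if k = i then 0 else if k < i then k else k - 1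
def dN (i k : ℕ) : ℕ := if k < i then k else k + 1

def uListN : List ℕ → ℕ → ℕ
  | [], k => k
  | i :: rest, k => uN i (uListN rest k)

def dListN : List ℕ → ℕ → ℕ
  | [], k => k
  | i :: rest, k => dListN rest (dN i k)

lemma dMap_valN (N i : ℕ) (k : Fin (N+1)) : (dMap N i k : ℕ) = dN i k.val := by
  unfold dMap dN; split_ifs <;> rfl

lemma uMap_valN (N i : ℕ) (hi : i ≤ N+1) (k : Fin (N+2)) : (uMap N i k : ℕ) = uN i k.val := by
  unfold uMap uN; have := k.isLt; split_ifs <;> first | omega | (simp_all; omega) | simp_all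

lemma chain_bound : ∀ (l : List ℕ) (i m : ℕ), List.Chain' (· < ·) (i :: l) →
    (∀ x ∈ i :: l, x ≤ m) → i + l.length ≤ m := by
  intro l
  induction l with
  | nil => intro i m _ hb; simpa using hb i (by simp)
  | cons j t ih =>
    intro i m hc hb
    have h1 : i < j := (List.isChain_cons_cons.mp hc).1
    have h2 := ih j m (List.isChain_cons_cons.mp hc).2 (fun x hx => hb x (by simp at hx ⊢; tauto))
    simp only [List.length_cons]; omega

lemma multi_tail {n : ℕ} {i : ℕ} {rest : List ℕ} (h : IsMultiIndex n (i :: rest)) :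
    IsMultiIndex n rest :=
  ⟨h.1.tail, fun x hx => h.2 x (List.mem_cons_of_mem _ hx)⟩

lemma dComp_val (m : ℕ) : ∀ (α : List ℕ) (h : α.length ≤ m) (k : Fin (m - α.length + 1)),
    (dComp m α h k : ℕ) = dListN α k.val := by
  intro α
  induction α with
  | nil => intro h k; rfl
  | cons i rest ih =>
    intro h k
    simp only [dComp]
    rw [ih]
    simp [dListN, dMap_valN, dN]

lemma uComp_val (n : ℕ) : ∀ (β : List ℕ) (h : β.length ≤ n), IsMultiIndex n β →
    ∀ k : Fin (n + 1), (uComp n β h k : ℕ) = uListN β k.val := by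
  intro β
  induction β with
  | nil => intro h _ k; rfl
  | cons i rest ih =>
    intro h hm k
    have hlen : rest.length + 1 ≤ n := by simpa using h
    have hib : i + rest.length ≤ n := chain_bound rest i n hm.1 (fun x hx => (hm.2 x hx).2)
    simp only [uComp, Fin.coe_cast]
    rw [uMap_valN _ _ (by omega), Fin.coe_cast, ih _ (multi_tail hm) k]
    rfl

lemma head_lt {i : ℕ} {rest : List ℕ} (h : List.Chain' (· < ·) (i :: rest)) :
    ∀ b ∈ rest, i < b :=
  (List.pairwise_cons.mp (List.isChain_iff_pairwise.mp h)).1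

lemma uListN_fix (j : ℕ) (hj : 1 ≤ j) : ∀ (β : List ℕ), (∀ b ∈ β, j < b) →
    ∀ k : ℕ, (uListN β k = j ↔ k = j) := by
  intro β
  induction β with
  | nil => intro _ k; rfl
  | cons i rest ih =>
    intro hlt k
    have hji : j < i := hlt i (by simp)
    rw [show uListN (i :: rest) k = uN i (uListN rest k) from rfl]
    rw [show (uN i (uListN rest k) = j ↔ uListN rest k = j) from by
      unfold uN; split_ifs <;> first | omega | (simp_all; omega) | simp_all]
    exact ih (fun b hb => hlt b (by simp [hb])) k

lemma uListN_zero : ∀ (β : List ℕ), List.Chain' (· < ·) β → (∀ b ∈ β, 1 ≤ b) →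
    ∀ k : ℕ, (uListN β k = 0 ↔ k = 0 ∨ k ∈ β) := by
  intro β
  induction β with
  | nil => intro _ _ k; simp [uListN]
  | cons i rest ih =>
    intro hc h1 k
    have hi1 : 1 ≤ i := h1 i (by simp)
    rw [show uListN (i :: rest) k = uN i (uListN rest k) from rfl]
    rw [show (uN i (uListN rest k) = 0 ↔ uListN rest k = 0 ∨ uListN rest k = i) from by
      unfold uN; split_ifs <;> first | omega | (simp_all; omega) | simp_all]
    rw [ih hc.tail (fun b hb => h1 b (by simp [hb])) k,
        uListN_fix i hi1 rest (head_lt hc) k]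
    simp only [List.mem_cons]
    tauto

lemma uN_surj (i j : ℕ) : ∃ k, uN i k = j ∧ k ≤ j + 1 := by
  by_cases h0 : j = 0
  · exact ⟨0, by unfold uN; simp [h0], by omega⟩
  by_cases hlt : j < i
  · refine ⟨j, ?_, by omega⟩
    unfold uN; split_ifs <;> first | omega | (simp_all; omega) | simp_all
  · refine ⟨j + 1, ?_, by omega⟩
    unfold uN; split_ifs <;> first | omega | (simp_all; omega) | simp_all

lemma uListN_surj : ∀ (β : List ℕ) (j : ℕ), ∃ k, uListN β k = j ∧ k ≤ j + β.length := by
  intro β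
  induction β with
  | nil => intro j; exact ⟨j, rfl, by omega⟩
  | cons i rest ih =>
    intro j
    obtain ⟨x, hx, hxb⟩ := uN_surj i j
    obtain ⟨k, hk, hkb⟩ := ih x
    exact ⟨k, by rw [show uListN (i :: rest) k = uN i (uListN rest k) from rfl, hk, hx],
      by simp only [List.length_cons]; omega⟩

lemma dListN_zero : ∀ (α : List ℕ), (∀ a ∈ α, 1 ≤ a) →
    ∀ k : ℕ, (dListN α k = 0 ↔ k = 0) := by
  intro α
  induction α with
  | nil => intro _ k; rfl
  | cons i rest ih =>
    intro h1 k
    have hi1 : 1 ≤ i := h1 i (by simp)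
    rw [show dListN (i :: rest) k = dListN rest (dN i k) from rfl,
        ih (fun b hb => h1 b (by simp [hb])) _,
        show (dN i k = 0 ↔ k = 0) from by
          unfold dN; split_ifs <;> first | omega | (simp_all; omega) | simp_all]

lemma dListN_fix (j : ℕ) : ∀ (α : List ℕ), (∀ a ∈ α, j < a) →
    ∀ k : ℕ, (dListN α k = j ↔ k = j) := by
  intro α
  induction α with
  | nil => intro _ k; rfl
  | cons i rest ih =>
    intro hlt k
    have hji : j < i := hlt i (by simp)
    rw [show dListN (i :: rest) k = dListN rest (dN i k) from rfl,
        ih (fun b hb => hlt b (by simp [hb])) _,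
        show (dN i k = j ↔ k = j) from by
          unfold dN; split_ifs <;> first | omega | (simp_all; omega) | simp_all]

lemma dListN_range (m : ℕ) : ∀ (α : List ℕ), List.Chain' (· < ·) α →
    (∀ a ∈ α, 1 ≤ a ∧ a ≤ m) → α.length ≤ m →
    ∀ j : ℕ, j ≤ m → ((∃ k, k ≤ m - α.length ∧ dListN α k = j) ↔ j ∉ α) := by
  intro α
  induction α with
  | nil =>
    intro _ _ _ j hj
    exact iff_of_true ⟨j, by simpa using hj, rfl⟩ (by simp)
  | cons i rest ih =>
    intro hc hb hlen j hj
    have hlen' : rest.length + 1 ≤ m := by simpa using hlen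
    have hib : i + rest.length ≤ m := chain_bound rest i m hc (fun x hx => (hb x hx).2)
    have hi1 : 1 ≤ i := (hb i (by simp)).1
    have ihr := ih hc.tail (fun b hb' => hb b (by simp [hb'])) (by omega) j hj
    have hfix := dListN_fix i rest (head_lt hc)
    constructor
    · rintro ⟨k, hk, hkeq⟩
      rw [show dListN (i :: rest) k = dListN rest (dN i k) from rfl] at hkeq
      have hdn : dN i k ≠ i := by unfold dN; split_ifs <;> omega
      have hji : j ≠ i := fun hji => hdn ((hfix (dN i k)).mp (by rw [hkeq, hji]))
      have hjr : j ∉ rest := by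
        rw [← ihr]
        refine ⟨dN i k, ?_, hkeq⟩
        have : dN i k ≤ k + 1 := by unfold dN; split_ifs <;> omega
        simp only [List.length_cons] at hk; omega
      simp [hji, hjr]
    · intro hnm
      simp only [List.mem_cons, not_or] at hnm
      obtain ⟨x, hx, hxeq⟩ := ihr.mpr hnm.2
      have hxi : x ≠ i := fun hxi => hnm.1 (by rw [← hxeq, hxi]; exact (hfix i).mpr rfl)
      rcases lt_or_gt_of_ne hxi with hlt | hgt
      · refine ⟨x, by simp only [List.length_cons]; omega, ?_⟩
        rw [show dListN (i :: rest) x = dListN rest (dN i x) from rfl,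
          show dN i x = x from by unfold dN; split_ifs <;> omega, hxeq]
      · refine ⟨x - 1, by simp only [List.length_cons]; omega, ?_⟩
        rw [show dListN (i :: rest) (x-1) = dListN rest (dN i (x-1)) from rfl,
          show dN i (x-1) = x from by unfold dN; split_ifs <;> omega, hxeq]

lemma sorted_ext (l₁ l₂ : List ℕ) (h₁ : List.Chain' (· < ·) l₁) (h₂ : List.Chain' (· < ·) l₂)
    (h : ∀ j, j ∈ l₁ ↔ j ∈ l₂) : l₁ = l₂ := by
  have p₁ := List.isChain_iff_pairwise.mp h₁
  have p₂ := List.isChain_iff_pairwise.mp h₂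
  haveI : IsAntisymm ℕ (· < ·) := ⟨fun a b hab hba => absurd hba (lt_asymm hab)⟩
  exact List.Perm.eq_of_pairwise (fun _ _ _ _ hab hba => absurd hba (lt_asymm hab)) p₁ p₂
    ((List.perm_ext_iff_of_nodup (p₁.imp ne_of_lt) (p₂.imp ne_of_lt)).mpr h)

/-- uniqueness of the factorizations `d_α ∘ u_β` of quasi-monotonic
functions: if `d_α ∘ u_β = d_{α'} ∘ u_{β'}` as maps `[n] → [m]`, then `α = α'` and
`β = β'`. -/
theorem factorization_unique (n m : ℕ) (α α' β β' : List ℕ)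
    (hα : IsMultiIndex m α) (hα' : IsMultiIndex m α')
    (hβ : IsMultiIndex n β) (hβ' : IsMultiIndex n β')
    (hαl : α.length ≤ m) (hα'l : α'.length ≤ m)
    (hβl : β.length ≤ n) (hβ'l : β'.length ≤ n)
    (hc : m - α.length = n - β.length) (hc' : m - α'.length = n - β'.length)
    (heq : (fun x : Fin (n + 1) =>
              dComp m α hαl (Fin.cast (by omega) (uComp n β hβl x)))
         = (fun x : Fin (n + 1) =>
              dComp m α' hα'l (Fin.cast (by omega) (uComp n β' hβ'l x)))) :
    α = α' ∧ β = β' := by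
  have hval : ∀ x : Fin (n + 1),
      dListN α (uListN β x.val) = dListN α' (uListN β' x.val) := by
    intro x
    have h1 := congrArg Fin.val (congrFun heq x)
    rw [dComp_val, dComp_val, Fin.coe_cast, Fin.coe_cast,
        uComp_val n β hβl hβ x, uComp_val n β' hβ'l hβ' x] at h1
    exact h1
  -- recover β
  have hkerβ : ∀ k : ℕ, k ≤ n → ((k = 0 ∨ k ∈ β) ↔ (k = 0 ∨ k ∈ β')) := by
    intro k hk
    have h1 : dListN α (uListN β k) = dListN α' (uListN β' k) := hval ⟨k, by omega⟩
    have e1 : dListN α (uListN β k) = 0 ↔ (k = 0 ∨ k ∈ β) := by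
      rw [dListN_zero α (fun a ha => (hα.2 a ha).1),
        uListN_zero β hβ.1 (fun b hb => (hβ.2 b hb).1)]
    have e2 : dListN α' (uListN β' k) = 0 ↔ (k = 0 ∨ k ∈ β') := by
      rw [dListN_zero α' (fun a ha => (hα'.2 a ha).1),
        uListN_zero β' hβ'.1 (fun b hb => (hβ'.2 b hb).1)]
    rw [← e1, ← e2, h1]
  have hmemβ : ∀ j, j ∈ β ↔ j ∈ β' := by
    intro j
    constructor
    · intro hj
      have hjn := (hβ.2 j hj)
      rcases (hkerβ j hjn.2).mp (Or.inr hj) with h0 | h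
      · omega
      · exact h
    · intro hj
      have hjn := (hβ'.2 j hj)
      rcases (hkerβ j hjn.2).mpr (Or.inr hj) with h0 | h
      · omega
      · exact h
  have hββ' : β = β' := sorted_ext β β' hβ.1 hβ'.1 hmemβ
  -- recover α
  have hmemα : ∀ j, j ∈ α ↔ j ∈ α' := by
    intro j
    by_cases hjm : j ≤ m
    case neg =>
      exact iff_of_false (fun hj => hjm (hα.2 j hj).2) (fun hj => hjm (hα'.2 j hj).2)
    have key : ∀ (γ δ : List ℕ), IsMultiIndex m γ → IsMultiIndex n δ →
        ∀ (hγl : γ.length ≤ m) (hδl : δ.length ≤ n), m - γ.length = n - δ.length →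
        (j ∉ γ ↔ ∃ x : Fin (n + 1), dListN γ (uListN δ x.val) = j) := by
      intro γ δ hγ hδ hγl hδl hcc
      constructor
      · intro hj
        obtain ⟨k, hk, hkeq⟩ := (dListN_range m γ hγ.1 hγ.2 hγl j hjm).mpr hj
        obtain ⟨x, hx, hxb⟩ := uListN_surj δ k
        have hxn : x ≤ n := by omega
        refine ⟨⟨x, by omega⟩, ?_⟩
        show dListN γ (uListN δ x) = j
        rw [hx, hkeq]
      · rintro ⟨x, hx⟩
        refine (dListN_range m γ hγ.1 hγ.2 hγl j hjm).mp ⟨uListN δ x.val, ?_, hx⟩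
        have hlt := (uComp n δ hδl x).isLt
        rw [uComp_val n δ hδl hδ x] at hlt
        omega
    rw [← not_iff_not, key α β hα hβ hαl hβl hc, key α' β' hα' hβ' hα'l hβ'l hc']
    constructor
    · rintro ⟨x, hx⟩
      exact ⟨x, by rw [← hval x]; exact hx⟩
    · rintro ⟨x, hx⟩
      exact ⟨x, by rw [hval x]; exact hx⟩
  exact ⟨sorted_ext α α' hα.1 hα'.1 hmemα, hββ'⟩
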